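/- For all real numbers α and γ, the two-qubit unitary exp(−i(α·X⊗X + γ·Z⊗Z)) can be written as a product of two controlled-unitaries up to local unitaries: there exist U, V ∈ U_c with exp(−i(α·X⊗X + γ·Z⊗Z)) = U·V. -/

import Mathlib

open Matrix Kronecker Complex

noncomputable section

/-- 2×2 complex matrices (one qubit operators). -/
abbrev M2 := Matrix (Fin 2) (Fin 2) ℂ
/-- 4×4 complex matrices indexed by `(Fin 2) × (Fin 2)` (two-qubit operators). -/
abbrev M4 := Matrix (Fin 2 × Fin 2) (Fin 2 × Fin 2) ℂ

/-- Pauli X. -/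
def PX : M2 := !![0, 1; 1, 0]
/-- Pauli Y. -/
def PY : M2 := !![0, -Complex.I; Complex.I, 0]
/-- Pauli Z. -/
def PZ : M2 := !![1, 0; 0, -1]

def IsUnitary2 (a : M2) : Prop := a ∈ Matrix.unitaryGroup (Fin 2) ℂ
def IsUnitary4 (U : M4) : Prop := U ∈ Matrix.unitaryGroup (Fin 2 × Fin 2) ℂ

/-- The global part `exp(i(αx X⊗X + αy Y⊗Y + αz Z⊗Z))` of a Kraus–Cirac decomposition. -/
def KCcore (ax ay az : ℝ) : M4 :=
  NormedSpace.exp (Complex.I •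
    ((ax : ℂ) • (PX ⊗ₖ PX) + (ay : ℂ) • (PY ⊗ₖ PY) + (az : ℂ) • (PZ ⊗ₖ PZ)))

/-- The number of nonzero coefficients among `(αx, αy, αz)`. -/
def nnz (ax ay az : ℝ) : ℕ :=
  (if ax = 0 then 0 else 1) + (if ay = 0 then 0 else 1) + (if az = 0 then 0 else 1)

/-- The Kraus–Cirac number `#KC(U)`: the minimum number of nonzero KC coefficients over
all Kraus–Cirac decompositions of `U`. -/
def KCnum (U : M4) : ℕ :=
  sInf { n | ∃ uA uB vA vB : M2, ∃ ax ay az : ℝ,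
    IsUnitary2 uA ∧ IsUnitary2 uB ∧ IsUnitary2 vA ∧ IsUnitary2 vB ∧
    U = (uA ⊗ₖ uB) * KCcore ax ay az * (vA ⊗ₖ vB) ∧ n = nnz ax ay az }

def E00 : M2 := !![1, 0; 0, 0]
def E11 : M2 := !![0, 0; 0, 1]

/-- Controlled-unitaries up to local unitaries. -/
def Uc : Set M4 := { U | ∃ a b c d w : M2,
  IsUnitary2 a ∧ IsUnitary2 b ∧ IsUnitary2 c ∧ IsUnitary2 d ∧ IsUnitary2 w ∧
  U = (a ⊗ₖ b) * (E00 ⊗ₖ (1 : M2) + E11 ⊗ₖ w) * (c ⊗ₖ d) }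

/-- Partial trace over the second qubit. -/
def ptraceB (M : M4) : M2 := Matrix.of fun i j => ∑ k : Fin 2, M (i, k) (j, k)

/-- The controlled-phase gate `diag(1,1,1,e^{iθ})`. -/
def Cp (θ : ℝ) : M4 :=
  Matrix.diagonal fun p => if p = ((1 : Fin 2), (1 : Fin 2)) then Complex.exp (Complex.I * θ) else 1


/-- The diagonal rotation `exp(-i t Z)`. -/
def dZ (t : ℝ) : M2 := Matrix.diagonal ![Complex.exp (-Complex.I*t), Complex.exp (Complex.I*t)]

/-- The Hadamard matrix. -/
def H2 : M2 := ((Real.sqrt 2 : ℂ))⁻¹ • !![1,1;1,-1]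

lemma dZ_unitary (t : ℝ) : IsUnitary2 (dZ t) := by
  rw [IsUnitary2, Matrix.mem_unitaryGroup_iff]
  ext i j
  fin_cases i <;> fin_cases j <;>
    simp [dZ, mul_apply, Fin.sum_univ_two, ← Complex.exp_conj, ← Complex.exp_add, _root_.map_mul]

lemma H2_mul_H2 : H2 * H2 = 1 := by
  ext i j
  fin_cases i <;> fin_cases j <;>
    simp [H2, mul_apply, Fin.sum_univ_two] <;>
    norm_num [← Complex.ofReal_inv, ← Complex.ofReal_mul, ← Complex.ofReal_add, ← mul_inv,
      Real.mul_self_sqrt]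

lemma H2_unitary : IsUnitary2 H2 := by
  rw [IsUnitary2, Matrix.mem_unitaryGroup_iff]
  have hs : star H2 = H2 := by
    ext i j
    fin_cases i <;> fin_cases j <;>
      simp [H2, conjTranspose_apply, ← Complex.ofReal_inv]
  rw [hs, H2_mul_H2]

lemma one_unitary : IsUnitary2 (1 : M2) := Submonoid.one_mem _

lemma HZH : H2 * PZ * H2 = PX := by
  ext i j
  fin_cases i <;> fin_cases j <;>
    simp [H2, PZ, PX, mul_apply, Fin.sum_univ_two] <;>
    norm_num [← Complex.ofReal_inv, ← Complex.ofReal_mul, ← Complex.ofReal_add, ← mul_inv,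
      Real.mul_self_sqrt]

def sZZ : Fin 2 × Fin 2 → ℂ := fun p => if p.1 = p.2 then 1 else -1

lemma zz_diag : PZ ⊗ₖ PZ = Matrix.diagonal sZZ := by
  ext p q
  fin_cases p <;> fin_cases q <;>
    simp [PZ, sZZ, Matrix.diagonal_apply, kroneckerMap_apply, Prod.ext_iff]

lemma expZZ (t : ℝ) : NormedSpace.exp ((-Complex.I * t) • (PZ ⊗ₖ PZ)) =
    Matrix.diagonal (fun p => Complex.exp (-Complex.I * t * sZZ p)) := by
  rw [zz_diag, ← Matrix.diagonal_smul, Matrix.exp_diagonal, Pi.exp_def]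
  congr 1
  funext p
  simp [← Complex.exp_eq_exp_ℂ]

lemma facZZ (t : ℝ) :
    Matrix.diagonal (fun p => Complex.exp (-Complex.I * t * sZZ p)) =
      ((1 : M2) ⊗ₖ dZ t) * (E00 ⊗ₖ (1 : M2) + E11 ⊗ₖ dZ (-(2*t))) := by
  ext p q
  fin_cases p <;> fin_cases q <;>
    · simp [dZ, sZZ, E00, E11, mul_apply, Matrix.diagonal_apply, Matrix.one_apply,
        kroneckerMap_apply, Fin.sum_univ_two, Fintype.sum_prod_type,
        ← Complex.exp_add, Prod.ext_iff]
      try push_cast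
      try ring_nf

/-- `exp(-i t Z⊗Z)` is a controlled-unitary up to local unitaries. -/
lemma expZZ_mem (t : ℝ) : NormedSpace.exp ((-Complex.I * t) • (PZ ⊗ₖ PZ)) ∈ Uc := by
  refine ⟨1, dZ t, 1, 1, dZ (-(2*t)), one_unitary, dZ_unitary t, one_unitary, one_unitary,
    dZ_unitary _, ?_⟩
  rw [expZZ, facZZ]
  rw [Matrix.one_kronecker_one, mul_one]

/-- Units for `H⊗H`. -/
def HHunit : (M4)ˣ where
  val := H2 ⊗ₖ H2
  inv := H2 ⊗ₖ H2
  val_inv := by rw [← Matrix.mul_kronecker_mul, H2_mul_H2, Matrix.one_kronecker_one]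
  inv_val := by rw [← Matrix.mul_kronecker_mul, H2_mul_H2, Matrix.one_kronecker_one]

lemma expXX (t : ℝ) : NormedSpace.exp ((-Complex.I * t) • (PX ⊗ₖ PX)) =
    (H2 ⊗ₖ H2) * NormedSpace.exp ((-Complex.I * t) • (PZ ⊗ₖ PZ)) * (H2 ⊗ₖ H2) := by
  have h1 : (-Complex.I * t) • (PX ⊗ₖ PX) =
      (HHunit : M4) * ((-Complex.I * t) • (PZ ⊗ₖ PZ)) * (↑HHunit⁻¹ : M4) := by
    show _ = (H2 ⊗ₖ H2) * _ * (H2 ⊗ₖ H2)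
    rw [Matrix.mul_smul, Matrix.smul_mul, ← Matrix.mul_kronecker_mul,
      ← Matrix.mul_kronecker_mul, HZH]
  rw [h1, Matrix.exp_units_conj]
  rfl

/-- `exp(-i t X⊗X)` is a controlled-unitary up to local unitaries. -/
lemma expXX_mem (t : ℝ) : NormedSpace.exp ((-Complex.I * t) • (PX ⊗ₖ PX)) ∈ Uc := by
  refine ⟨H2, H2 * dZ t, H2, H2, dZ (-(2*t)), H2_unitary,
    Submonoid.mul_mem _ H2_unitary (dZ_unitary t), H2_unitary, H2_unitary, dZ_unitary _, ?_⟩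
  rw [expXX, expZZ, facZZ]
  rw [show H2 ⊗ₖ (H2 * dZ t) = (H2 ⊗ₖ H2) * ((1 : M2) ⊗ₖ dZ t) by
    rw [← Matrix.mul_kronecker_mul, mul_one]]
  simp only [mul_assoc]

lemma commXXZZ : Commute (PX ⊗ₖ PX : M4) (PZ ⊗ₖ PZ) := by
  have h : PX * PZ = -(PZ * PX) := by simp [PX, PZ, Matrix.mul_fin_two]
  show _ = _
  rw [← Matrix.mul_kronecker_mul, ← Matrix.mul_kronecker_mul, h,
    show -(PZ*PX) = ((-1:ℂ)) • (PZ*PX) from (neg_one_smul ℂ _).symm,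
    Matrix.smul_kronecker, Matrix.kronecker_smul, smul_smul]
  norm_num

/-- `exp(−i(α X⊗X + γ Z⊗Z))` is a product of two controlled-unitaries up to
local unitaries. -/
theorem stmt13 (α γ : ℝ) :
    ∃ U V : M4, U ∈ Uc ∧ V ∈ Uc ∧
      NormedSpace.exp ((-Complex.I) •
          ((α : ℂ) • (PX ⊗ₖ PX) + (γ : ℂ) • (PZ ⊗ₖ PZ))) = U * V := by
  refine ⟨_, _, expXX_mem α, expZZ_mem γ, ?_⟩
  have hsplit : (-Complex.I) • ((α : ℂ) • (PX ⊗ₖ PX) + (γ : ℂ) • (PZ ⊗ₖ PZ)) =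
      (-Complex.I * α) • (PX ⊗ₖ PX) + (-Complex.I * γ) • (PZ ⊗ₖ PZ) := by
    rw [smul_add, smul_smul, smul_smul]
  rw [hsplit, Matrix.exp_add_of_commute]
  exact (commXXZZ.smul_left _).smul_right _

end
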